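/- arXiv:math/0605756 — 6 statements merged into one kernel-verified Lean document; each statement's English description precedes it below -/
import Mathlib

section
/- Let ξ be a skew-Hermitian endomorphism of V and v ∈ V. If ‖exp(itξ)v‖² ≥ ‖v‖² for all real t (i.e., the function t ↦ ‖exp(itξ)v‖² attains its minimum at t = 0), then ⟨ξv, v⟩ = 0. (This is the computation proving the easy direction of the Kempf–Ness criterion: at a point of minimal norm on a closed orbit, the moment map μ(v)(ξ) = (1/2i)⟨ξv, v⟩ vanishes.) -/
/-- Let `ξ` be a skew-Hermitian endomorphism of a finite-dimensional
complex inner product space `V` and `v ∈ V`. If `‖exp(itξ)v‖² ≥ ‖v‖²` for all real `t`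
(the function `t ↦ ‖exp(itξ)v‖²` attains its minimum at `t = 0`), then `⟪ξv, v⟫ = 0`. -/
theorem kempfNess_easy_direction
    {V : Type*} [NormedAddCommGroup V] [InnerProductSpace ℂ V] [FiniteDimensional ℂ V]
    (ξ : V →L[ℂ] V)
    (hskew : ∀ u w : V, inner ℂ (ξ u) w = -(inner ℂ u (ξ w) : ℂ))
    (v : V)
    (hmin : ∀ t : ℝ, ‖v‖ ^ 2 ≤ ‖(NormedSpace.exp (((t : ℂ) * Complex.I) • ξ)) v‖ ^ 2) :
    (inner ℂ (ξ v) v : ℂ) = 0 := by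
  set z : ℂ := inner ℂ (ξ v) v with hz
  -- real part vanishes by skew-Hermitianness
  have hre : z.re = 0 := by
    have h1 : (starRingEnd ℂ) z = -z := by
      rw [hz, inner_conj_symm]
      have h2 := hskew v v
      linear_combination h2
    have h3 := congrArg Complex.re h1
    simp at h3
    linarith
  -- imaginary part vanishes by minimality
  letI : InnerProductSpace ℝ V := InnerProductSpace.complexToReal
  set A : V →L[ℂ] V := Complex.I • ξ with hA
  have key : ∀ s : ℝ, ((s : ℂ) * Complex.I) • ξ = s • A := by
    intro s
    rw [hA, ← smul_smul, ← smul_one_smul ℂ s (Complex.I • ξ)]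
    norm_num
  have hexp : ∀ t : ℝ, HasDerivAt (fun s : ℝ => NormedSpace.exp (s • A))
      (NormedSpace.exp (t • A) * A) t := by
    intro t
    have h := hasDerivAt_exp_smul_const (𝕂 := ℝ) (𝔸 := V →L[ℂ] V) A t
    exact h
  set u : ℝ → V := fun t => (NormedSpace.exp (t • A)) v with hu
  set L : (V →L[ℂ] V) →L[ℝ] V :=
    ((ContinuousLinearMap.apply ℂ V v).restrictScalars ℝ) with hL
  have hLdef : ∀ T : V →L[ℂ] V, L T = T v := fun T => rfl
  have hud : ∀ t : ℝ, HasDerivAt u ((NormedSpace.exp (t • A) * A) v) t := by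
    intro t
    have := (L.hasFDerivAt (x := NormedSpace.exp (t • A))).comp_hasDerivAt t (hexp t)
    exact this
  have hu0 : u 0 = v := by simp [hu, NormedSpace.exp_zero]
  have hud0 : HasDerivAt u (A v) 0 := by
    have := hud 0
    simpa [NormedSpace.exp_zero] using this
  set f : ℝ → ℝ := fun t => (inner ℝ (u t) (u t) : ℝ) with hf
  have hfd : HasDerivAt f ((inner ℝ (u 0) (A v) : ℝ) + (inner ℝ (A v) (u 0) : ℝ)) 0 :=
    HasDerivAt.inner ℝ hud0 hud0
  have hmin' : IsLocalMin f 0 := by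
    apply Filter.Eventually.of_forall
    intro t
    have h1 : f t = ‖u t‖ ^ 2 := real_inner_self_eq_norm_sq _
    have h0 : f 0 = ‖v‖ ^ 2 := by
      simp only [hf, hu0]; exact real_inner_self_eq_norm_sq _
    rw [h1, h0]
    have h2 := hmin t
    rw [key t] at h2
    exact h2
  have hderiv0 : (inner ℝ (u 0) (A v) : ℝ) + (inner ℝ (A v) (u 0) : ℝ) = 0 :=
    hmin'.hasDerivAt_eq_zero hfd
  rw [hu0, real_inner_comm v (A v)] at hderiv0
  have him' : (inner ℝ (A v) v : ℝ) = 0 := by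
    rw [real_inner_comm]; linarith
  have hAv : (inner ℂ (A v) v : ℂ) = -Complex.I * z := by
    rw [hA]
    simp [inner_smul_left, hz]
    ring
  have him : z.im = 0 := by
    have h2 : (inner ℝ (A v) v : ℝ) = (inner ℂ (A v) v : ℂ).re :=
      real_inner_eq_re_inner (𝕜 := ℂ) _ _
    rw [him', hAv] at h2
    simp at h2
    linarith
  exact Complex.ext hre him
end

section
/- Let τ : ℂˣ → GL(V) be a group homomorphism such that τ(z) is unitary whenever |z| = 1, admitting a weight-space decomposition: finitely many subspaces V_i ⊆ V indexed by integers i with V = ⨁_i V_i and τ(z)x = zⁱx for all x ∈ V_i, z ∈ ℂˣ. Let v ∈ V with components v_i ∈ V_i. If v_i = 0 for all i < 0 and Σ_i i·‖v_i‖² = 0, then v = v_0; in particular τ(z)v = v for all z ∈ ℂˣ. (This is the computation proving the nontrivial direction of the Kempf–Ness criterion: a zero of the moment map whose orbit under a destabilizing one-parameter subgroup has a limit is fixed by that subgroup.) -/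
/-- Let `τ : ℂˣ → GL(V)` be a group homomorphism, unitary on the unit
circle, admitting a weight-space decomposition `V = ⨁ᵢ Vᵢ` (finitely many nonzero
subspaces, indexed by integers) with `τ z x = zⁱ • x` for `x ∈ Vᵢ`.  Let `v ∈ V` with
components `vᵢ ∈ Vᵢ`.  If `vᵢ = 0` for all `i < 0` and `Σᵢ i‖vᵢ‖² = 0`, then `v = v₀`;
in particular `τ z v = v` for all `z ∈ ℂˣ`. -/
theorem kempfNess_hard_direction_computation
    {V : Type*} [NormedAddCommGroup V] [InnerProductSpace ℂ V] [FiniteDimensional ℂ V]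
    (τ : ℂˣ →* (V ≃ₗ[ℂ] V))
    (hunit : ∀ z : ℂˣ, ‖(z : ℂ)‖ = 1 → ∀ x y : V, inner ℂ (τ z x) (τ z y) = (inner ℂ x y : ℂ))
    (S : Finset ℤ) (Vwt : ℤ → Submodule ℂ V)
    (hne : ∀ i ∈ S, Vwt i ≠ ⊥) (hsupp : ∀ i ∉ S, Vwt i = ⊥)
    (hdec : DirectSum.IsInternal fun i : ℤ => Vwt i)
    (hwt : ∀ (i : ℤ), ∀ x ∈ Vwt i, ∀ z : ℂˣ, τ z x = ((z : ℂ) ^ i) • x)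
    (v : V) (vc : ℤ → V) (hvc : ∀ i, vc i ∈ Vwt i) (hv : v = ∑ i ∈ S, vc i)
    (hnonneg : ∀ i < 0, vc i = 0)
    (hmoment : ∑ i ∈ S, (i : ℝ) * ‖vc i‖ ^ 2 = 0) :
    v = vc 0 ∧ ∀ z : ℂˣ, τ z v = v := by
  have hterm : ∀ i ∈ S, (0:ℝ) ≤ (i : ℝ) * ‖vc i‖ ^ 2 := by
    intro i _
    rcases lt_or_ge i 0 with h | h
    · simp [hnonneg i h]
    · exact mul_nonneg (by exact_mod_cast h) (by positivity)
  have hzero : ∀ i ∈ S, i ≠ 0 → vc i = 0 := by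
    intro i hi h0
    rcases lt_or_ge i 0 with h | h
    · exact hnonneg i h
    · have := (Finset.sum_eq_zero_iff_of_nonneg hterm).mp hmoment i hi
      have hi0 : (i:ℝ) ≠ 0 := by exact_mod_cast h0
      have : ‖vc i‖ ^ 2 = 0 := by
        rcases mul_eq_zero.mp this with h | h
        · exact absurd h hi0
        · exact h
      simpa using pow_eq_zero_iff (n := 2) (by norm_num) |>.mp this
  have hveq : v = vc 0 := by
    by_cases h0 : (0 : ℤ) ∈ S
    · rw [hv, Finset.sum_eq_single_of_mem 0 h0]
      intro i hi hne'; exact hzero i hi hne'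
    · have hvc0 : vc 0 = 0 := by
        have := hsupp 0 h0
        have := hvc 0
        rw [hsupp 0 h0] at this
        simpa using this
      rw [hv, hvc0]
      refine Finset.sum_eq_zero fun i hi => ?_
      exact hzero i hi (fun h => h0 (h ▸ hi))
  refine ⟨hveq, fun z => ?_⟩
  rw [hveq, hwt 0 (vc 0) (hvc 0) z]
  simp
end

section
/- Let 𝔨 be a real Lie subalgebra of the endomorphisms of V consisting of skew-Hermitian operators (i.e., a real subspace of skew-Hermitian endomorphisms closed under the commutator [ξ, η] = ξ∘η − η∘ξ), and let v ∈ V satisfy ⟨ξv, v⟩ = 0 for all ξ ∈ 𝔨. Then ⟨ξv, ηv⟩ ∈ ℝ for all ξ, η ∈ 𝔨; that is, Im⟨ξv, ηv⟩ = 0, so the tangent space 𝔨·v to the compact orbit at v is isotropic for the symplectic form ω = Im⟨·,·⟩. -/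
/-- Let `𝔨` be a real Lie subalgebra of the endomorphisms of a
finite-dimensional complex inner product space `V` consisting of skew-Hermitian operators
(a real subspace of skew-Hermitian endomorphisms closed under the commutator), and let
`v ∈ V` satisfy `⟪ξv, v⟫ = 0` for all `ξ ∈ 𝔨`.  Then `Im ⟪ξv, ηv⟫ = 0` for all
`ξ, η ∈ 𝔨`: the tangent space `𝔨·v` to the compact orbit at `v` is isotropic for the
symplectic form `ω = Im ⟪·,·⟫`. -/
theorem compact_orbit_isotropic
    {V : Type*} [NormedAddCommGroup V] [InnerProductSpace ℂ V] [FiniteDimensional ℂ V]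
    (k : Set (V →ₗ[ℂ] V))
    (hskew : ∀ ξ ∈ k, ∀ u w : V, inner ℂ (ξ u) w = -(inner ℂ u (ξ w) : ℂ))
    (hadd : ∀ ξ ∈ k, ∀ η ∈ k, ξ + η ∈ k)
    (hsmul : ∀ (c : ℝ), ∀ ξ ∈ k, (c : ℂ) • ξ ∈ k)
    (hbracket : ∀ ξ ∈ k, ∀ η ∈ k, ξ ∘ₗ η - η ∘ₗ ξ ∈ k)
    (v : V) (hv : ∀ ξ ∈ k, (inner ℂ (ξ v) v : ℂ) = 0) :
    ∀ ξ ∈ k, ∀ η ∈ k, (inner ℂ (ξ v) (η v) : ℂ).im = 0 := by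
  intro ξ hξ η hη
  have h1 : (inner ℂ (η (ξ v)) v : ℂ) = -(inner ℂ (ξ v) (η v) : ℂ) := hskew η hη (ξ v) v
  have h2 : (inner ℂ (ξ (η v)) v : ℂ) = -(inner ℂ (η v) (ξ v) : ℂ) := hskew ξ hξ (η v) v
  have h3 := hv _ (hbracket ξ hξ η hη)
  simp only [LinearMap.sub_apply, LinearMap.comp_apply, inner_sub_left] at h3
  have h4 : (inner ℂ (ξ v) (η v) : ℂ) = inner ℂ (η v) (ξ v) := by
    have := sub_eq_zero.mp h3
    rw [h1, h2] at this
    exact neg_inj.mp this.symm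
  have h5 : (inner ℂ (ξ v) (η v) : ℂ) = (starRingEnd ℂ) (inner ℂ (ξ v) (η v)) := by
    conv_lhs => rw [h4]
    exact (inner_conj_symm (𝕜 := ℂ) (η v) (ξ v)).symm
  have := congrArg Complex.im h5
  rw [Complex.conj_im] at this
  linarith
end

section
/- Let 𝔨 be a real Lie subalgebra of the endomorphisms of V consisting of skew-Hermitian operators, and let v ∈ V satisfy ⟨ξv, v⟩ = 0 for all ξ ∈ 𝔨. Then the real dimension of the real subspace 𝔨·v = {ξv : ξ ∈ 𝔨} is at most the complex dimension of its complex span: dim_ℝ span_ℝ{ξv : ξ ∈ 𝔨} ≤ dim_ℂ span_ℂ{ξv : ξ ∈ 𝔨}. (Since 𝔤 = 𝔨 ⊕ i𝔨, this is the inequality dim_ℝ Kv ≤ dim_ℂ Gv, equation (1) of the paper.) -/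
/-- Let `𝔨` be a real Lie subalgebra of the endomorphisms of a
finite-dimensional complex inner ℂ product space `V` consisting of skew-Hermitian operators,
and let `v ∈ V` satisfy `⟪ξv, v⟫ = 0` for all `ξ ∈ 𝔨`.  Then the real dimension of the
real span of `𝔨·v = {ξv : ξ ∈ 𝔨}` is at most the complex dimension of its complex span:
`dim_ℝ Kv ≤ dim_ℂ Gv` (equation (1) of the paper). -/
theorem real_orbit_dim_le_complex_orbit_dim
    {V : Type*} [NormedAddCommGroup V] [InnerProductSpace ℂ V] [FiniteDimensional ℂ V]
    (k : Set (V →ₗ[ℂ] V))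
    (hskew : ∀ ξ ∈ k, ∀ u w : V, inner ℂ (ξ u) w = -(inner ℂ u (ξ w) : ℂ))
    (hadd : ∀ ξ ∈ k, ∀ η ∈ k, ξ + η ∈ k)
    (hsmul : ∀ (c : ℝ), ∀ ξ ∈ k, (c : ℂ) • ξ ∈ k)
    (hbracket : ∀ ξ ∈ k, ∀ η ∈ k, ξ ∘ₗ η - η ∘ₗ ξ ∈ k)
    (v : V) (hv : ∀ ξ ∈ k, (inner ℂ (ξ v) v : ℂ) = 0) :
    Module.finrank ℝ (Submodule.span ℝ ((fun ξ : V →ₗ[ℂ] V => ξ v) '' k)) ≤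
      Module.finrank ℂ (Submodule.span ℂ ((fun ξ : V →ₗ[ℂ] V => ξ v) '' k)) := by
  have : FiniteDimensional ℝ V := Module.Finite.trans ℂ V
  set S : Set V := (fun ξ : V →ₗ[ℂ] V => ξ v) '' k with hS
  set u : Submodule ℝ V := Submodule.span ℝ S with hu
  set W : Submodule ℂ V := Submodule.span ℂ S with hW
  -- base case: inner ℂ products of generators are real
  have hbase : ∀ x ∈ S, ∀ y ∈ S, (starRingEnd ℂ) (inner ℂ x y : ℂ) = inner ℂ x y := by
    rintro _ ⟨ξ, hξ, rfl⟩ _ ⟨η, hη, rfl⟩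
    have h0 := hv _ (hbracket ξ hξ η hη)
    simp only [LinearMap.sub_apply, LinearMap.comp_apply, inner_sub_left] at h0
    have h1 : (inner ℂ (ξ (η v)) v : ℂ) = -(inner ℂ (η v) (ξ v)) := hskew ξ hξ (η v) v
    have h2 : (inner ℂ (η (ξ v)) v : ℂ) = -(inner ℂ (ξ v) (η v)) := hskew η hη (ξ v) v
    rw [inner_conj_symm]
    linear_combination -h0 + h1 - h2
  have hreal : ∀ x ∈ u, ∀ y ∈ u, (starRingEnd ℂ) (inner ℂ x y : ℂ) = inner ℂ x y := by
    intro x hx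
    induction hx using Submodule.span_induction with
    | mem x hxS =>
        intro y hy
        induction hy using Submodule.span_induction with
        | mem y hyS => exact hbase x hxS y hyS
        | zero => simp
        | add y z hy hz ihy ihz => simp [inner_add_right, map_add, ihy, ihz]
        | smul r y hy ihy =>
            have : (r • y : V) = (r : ℂ) • y := by simp
            rw [this, inner_smul_right, map_mul, ihy]
            simp
    | zero => simp
    | add x y hx hy ihx ihy =>
        intro z hz
        simp [inner_add_left, map_add, ihx z hz, ihy z hz]
    | smul r x hx ihx =>
        intro z hz
        have : (r • x : V) = (r : ℂ) • x := by simp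
        rw [this, inner_smul_left, map_mul, ihx z hz]
        simp
  -- multiplication by I as a real-linear map
  set J : V →ₗ[ℝ] V := (Complex.I • (LinearMap.id : V →ₗ[ℂ] V)).restrictScalars ℝ with hJdef
  have hJ : ∀ x : V, J x = Complex.I • x := fun x => rfl
  have hJinj : Function.Injective J := by
    intro a b hab
    rw [hJ, hJ] at hab
    exact smul_right_injective V Complex.I_ne_zero hab
  have hdisj : Disjoint u (u.map J) := by
    rw [Submodule.disjoint_def]
    intro x hx1 hx2
    obtain ⟨y, hy, hxy⟩ := hx2
    have hc : (starRingEnd ℂ) (inner ℂ x y : ℂ) = inner ℂ x y := hreal x hx1 y hy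
    have hxx : (inner ℂ x x : ℂ) = Complex.I * inner ℂ x y := by
      rw [← hxy, hJ]
      exact inner_smul_right _ _ _
    have h5 : Complex.I * (inner ℂ x y : ℂ) = -(Complex.I * inner ℂ x y) := by
      have h6 := hreal x hx1 x hx1
      rw [hxx, map_mul, hc] at h6
      simpa using h6.symm
    have hz : Complex.I * (inner ℂ x y : ℂ) = 0 := by linear_combination h5 / 2
    exact inner_self_eq_zero.mp (by rw [hxx, hz])
  have hmap : Module.finrank ℝ (u.map J) = Module.finrank ℝ u :=
    ((Submodule.equivMapOfInjective J hJinj u).finrank_eq).symm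
  have hle : u ⊔ u.map J ≤ W.restrictScalars ℝ := by
    apply sup_le
    · rw [hu, Submodule.span_le]
      intro x hx
      exact Submodule.subset_span hx
    · rw [Submodule.map_le_iff_le_comap, hu, Submodule.span_le]
      intro x hx
      refine Submodule.mem_comap.mpr ?_
      show Complex.I • x ∈ W
      exact W.smul_mem _ (Submodule.subset_span hx)
  have hsum := Submodule.finrank_sup_add_finrank_inf_eq u (u.map J)
  rw [hdisj.eq_bot, finrank_bot] at hsum
  have h2d : Module.finrank ℝ u + Module.finrank ℝ u ≤
      Module.finrank ℝ (W.restrictScalars ℝ) := by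
    calc Module.finrank ℝ u + Module.finrank ℝ u
        = Module.finrank ℝ u + Module.finrank ℝ (u.map J) := by rw [hmap]
      _ = Module.finrank ℝ ↥(u ⊔ u.map J) + 0 := hsum.symm
      _ = Module.finrank ℝ ↥(u ⊔ u.map J) := by ring
      _ ≤ Module.finrank ℝ (W.restrictScalars ℝ) := Submodule.finrank_mono hle
  have hWr : Module.finrank ℝ (W.restrictScalars ℝ) = 2 * Module.finrank ℂ W := by
    have h7 : Module.finrank ℝ ℂ * Module.finrank ℂ W = Module.finrank ℝ W :=
      Module.finrank_mul_finrank ℝ ℂ W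
    rw [Complex.finrank_real_complex] at h7
    exact h7.symm ▸ rfl
  omega
end

section
/- Let W be a complex vector space and 𝔨 a real-linear subspace of W (viewed as a real vector space) with 𝔨 ∩ i𝔨 = {0}. Let U be a complex-linear subspace of W such that dim_ℝ(U ∩ 𝔨) ≥ dim_ℂ U. Then U ∩ 𝔨 is a real form of U: U = (U ∩ 𝔨) ⊕ i(U ∩ 𝔨) as a real vector space, and in particular dim_ℝ(U ∩ 𝔨) = dim_ℂ U. (Applied in the paper with W = 𝔤, 𝔨 a compact real form, and U = 𝔤_v the stabilizer subalgebra, giving that 𝔤_v ∩ 𝔨 is a real form of 𝔤_v.) -/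
/-- Multiplication by `I` as a real-linear equivalence. -/
noncomputable def mulI {W : Type*} [AddCommGroup W] [Module ℂ W] : W ≃ₗ[ℝ] W where
  toFun x := Complex.I • x
  invFun x := (-Complex.I) • x
  map_add' := smul_add _
  map_smul' r x := smul_comm _ _ _
  left_inv x := by simp [smul_smul]
  right_inv x := by simp [smul_smul]

/-- Let `W` be a finite-dimensional complex vector space and `𝔨` a
real-linear subspace of `W` with `𝔨 ∩ i𝔨 = 0`.  Let `U` be a complex subspace of `W`
with `dim_ℝ (U ∩ 𝔨) ≥ dim_ℂ U`.  Then `U ∩ 𝔨` is a real form of `U`: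
`U = (U ∩ 𝔨) ⊕ i(U ∩ 𝔨)` as a real vector space, and `dim_ℝ (U ∩ 𝔨) = dim_ℂ U`. -/
theorem real_form_of_large_real_part
    {W : Type*} [AddCommGroup W] [Module ℂ W] [FiniteDimensional ℂ W]
    (k : Submodule ℝ W)
    (hki : ∀ x ∈ k, (∃ y ∈ k, x = Complex.I • y) → x = 0)
    (U : Submodule ℂ W)
    (hdim : Module.finrank ℂ U ≤ Module.finrank ℝ (U.restrictScalars ℝ ⊓ k : Submodule ℝ W)) :
    (∀ u ∈ U, ∃ a ∈ U.restrictScalars ℝ ⊓ k, ∃ b ∈ U.restrictScalars ℝ ⊓ k,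
        u = a + Complex.I • b) ∧
    (∀ a ∈ U.restrictScalars ℝ ⊓ k, ∀ b ∈ U.restrictScalars ℝ ⊓ k,
        a + Complex.I • b = 0 → a = 0 ∧ b = 0) ∧
    Module.finrank ℝ (U.restrictScalars ℝ ⊓ k : Submodule ℝ W) = Module.finrank ℂ U := by
  set V : Submodule ℝ W := U.restrictScalars ℝ ⊓ k with hV
  set Vi : Submodule ℝ W := V.map (mulI : W ≃ₗ[ℝ] W).toLinearMap with hVi
  have hmemVi : ∀ x, x ∈ Vi ↔ ∃ y ∈ V, x = Complex.I • y := by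
    intro x
    constructor
    · rintro ⟨y, hy, rfl⟩; exact ⟨y, hy, rfl⟩
    · rintro ⟨y, hy, rfl⟩; exact ⟨y, hy, rfl⟩
  -- V ⊓ Vi = ⊥
  have hinf : V ⊓ Vi = ⊥ := by
    rw [Submodule.eq_bot_iff]
    rintro x ⟨hxV, hxVi⟩
    obtain ⟨y, hy, rfl⟩ := (hmemVi x).mp hxVi
    exact hki _ hxV.2 ⟨y, hy.2, rfl⟩
  -- V ⊔ Vi ≤ U (over ℝ)
  have hle : V ⊔ Vi ≤ U.restrictScalars ℝ := by
    apply sup_le inf_le_left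
    rintro x hx
    obtain ⟨y, hy, rfl⟩ := (hmemVi x).mp hx
    exact U.smul_mem _ hy.1
  have hfVi : Module.finrank ℝ Vi = Module.finrank ℝ V :=
    LinearEquiv.finrank_map_eq (mulI : W ≃ₗ[ℝ] W) V
  have hUR : Module.finrank ℝ (U.restrictScalars ℝ : Submodule ℝ W) =
      2 * Module.finrank ℂ U := by
    have := Module.finrank_mul_finrank ℝ ℂ U
    rw [Complex.finrank_real_complex] at this
    exact this.symm
  have hsup : Module.finrank ℝ (V ⊔ Vi : Submodule ℝ W) =
      Module.finrank ℝ V + Module.finrank ℝ V := by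
    have h := Submodule.finrank_sup_add_finrank_inf_eq V Vi
    rw [hinf, hfVi] at h
    simpa using h
  have hfin : FiniteDimensional ℝ W := Module.Finite.trans ℂ W
  have heq : V ⊔ Vi = U.restrictScalars ℝ := by
    apply Submodule.eq_of_le_of_finrank_le hle
    rw [hUR, hsup]
    omega
  have hdim' : Module.finrank ℝ V = Module.finrank ℂ U := by
    have : Module.finrank ℝ (V ⊔ Vi : Submodule ℝ W) =
        Module.finrank ℝ (U.restrictScalars ℝ : Submodule ℝ W) := by rw [heq]
    rw [hsup, hUR] at this
    omega
  refine ⟨?_, ?_, hdim'⟩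
  · intro u hu
    have : u ∈ V ⊔ Vi := by rw [heq]; exact hu
    obtain ⟨a, ha, c, hc, rfl⟩ := Submodule.mem_sup.mp this
    obtain ⟨b, hb, rfl⟩ := (hmemVi c).mp hc
    exact ⟨a, ha, b, hb, rfl⟩
  · intro a ha b hb h
    have hIb : Complex.I • b ∈ Vi := (hmemVi _).mpr ⟨b, hb, rfl⟩
    have ha' : a ∈ V ⊓ Vi := by
      refine ⟨ha, ?_⟩
      have : a = -(Complex.I • b) := eq_neg_of_add_eq_zero_left h
      rw [this]
      exact Vi.neg_mem hIb
    have ha0 : a = 0 := by rw [hinf] at ha'; exact ha'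
    have hb0 : Complex.I • b = 0 := by rw [ha0, zero_add] at h; exact h
    refine ⟨ha0, ?_⟩
    have := congrArg (fun x => (-Complex.I) • x) hb0
    simpa [smul_smul] using this
end

section
/- Let 𝔨 be a real Lie subalgebra of the endomorphism algebra of V (with bracket the commutator) consisting of skew-Hermitian operators. Then 𝔨 is a reductive Lie algebra: 𝔨 decomposes as the direct sum of its center and its derived subalgebra [𝔨, 𝔨], and [𝔨, 𝔨] is a semisimple Lie algebra. (This is the reason why the stabilizer subalgebra in the proof of the Matsushima criterion, having a compact real form, is reductive.) -/
open LinearMap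

section SkewHermAux

variable {V : Type*} [NormedAddCommGroup V] [InnerProductSpace ℂ V] [FiniteDimensional ℂ V]

lemma skewHermAux_trace_eq_sum_inner (f : Module.End ℂ V) :
    LinearMap.trace ℂ V f =
      ∑ i, (inner ℂ ((stdOrthonormalBasis ℂ V) i) (f ((stdOrthonormalBasis ℂ V) i)) : ℂ) := by
  set b := stdOrthonormalBasis ℂ V
  rw [LinearMap.trace_eq_matrix_trace ℂ b.toBasis, Matrix.trace]
  refine Finset.sum_congr rfl fun i _ => ?_
  simp [Matrix.diag, LinearMap.toMatrix_apply, OrthonormalBasis.coe_toBasis_repr_apply,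
    OrthonormalBasis.repr_apply_apply, OrthonormalBasis.coe_toBasis]

lemma skewHermAux_trace_key (a b c : Module.End ℂ V) :
    LinearMap.trace ℂ V (⁅a, b⁆ * c) = -LinearMap.trace ℂ V (b * ⁅a, c⁆) := by
  rw [Ring.lie_def, Ring.lie_def]
  have h1 : LinearMap.trace ℂ V ((a * b) * c) = LinearMap.trace ℂ V (b * (c * a)) := by
    rw [mul_assoc, LinearMap.trace_mul_comm ℂ a (b * c), mul_assoc]
  have h2 : LinearMap.trace ℂ V ((b * a) * c) = LinearMap.trace ℂ V (b * (a * c)) := by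
    rw [mul_assoc]
  simp only [sub_mul, mul_sub, map_sub]
  rw [h1, h2]; ring

end SkewHermAux

attribute [local instance] LieRing.ofAssociativeRing

set_option maxHeartbeats 1000000 in
set_option synthInstance.maxHeartbeats 400000 in
/-- Let `𝔨` be a real Lie subalgebra of the endomorphism algebra of a
finite-dimensional complex inner product space `V` (with bracket the commutator)
consisting of skew-Hermitian operators.  Then `𝔨` is a reductive Lie algebra: it is the
direct sum of its center and its derived subalgebra `[𝔨, 𝔨]`, and `[𝔨, 𝔨]` is a
semisimple Lie algebra. -/
theorem skewHermitian_lieSubalgebra_reductive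
    {V : Type*} [NormedAddCommGroup V] [InnerProductSpace ℂ V] [FiniteDimensional ℂ V]
    (k : LieSubalgebra ℝ (Module.End ℂ V))
    (hskew : ∀ ξ ∈ k, ∀ u w : V, inner ℂ (ξ u) w = -(inner ℂ u (ξ w) : ℂ)) :
    IsCompl (LieAlgebra.center ℝ k) (LieAlgebra.derivedSeries ℝ k 1) ∧
    LieAlgebra.IsSemisimple ℝ (LieAlgebra.derivedSeries ℝ k 1) := by
  classical
  haveI : FiniteDimensional ℝ (Module.End ℂ V) := Module.Finite.trans ℂ (Module.End ℂ V)
  haveI : FiniteDimensional ℝ k := by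
    have : FiniteDimensional ℝ k.toSubmodule := inferInstance
    exact this
  -- The invariant positive definite form `Φ x y = -Re (tr (x * y))`.
  let Φ : LinearMap.BilinForm ℝ k := LinearMap.mk₂ ℝ
    (fun x y => (-(LinearMap.trace ℂ V (x.val * y.val))).re)
    (by intro x x' y; simp [add_mul, neg_add]; ring)
    (by intro r x y
        have h : ((r • x : k) : Module.End ℂ V) = r • (x : Module.End ℂ V) := rfl
        simp [h, smul_mul_assoc, LinearMap.map_smul_of_tower])
    (by intro x y y'; simp [mul_add, neg_add]; ring)
    (by intro r x y
        have h : ((r • y : k) : Module.End ℂ V) = r • (y : Module.End ℂ V) := rfl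
        simp [h, mul_smul_comm, LinearMap.map_smul_of_tower])
  have hΦ_apply : ∀ x y : k, Φ x y = (-(LinearMap.trace ℂ V (x.val * y.val))).re :=
    fun _ _ => rfl
  have hΦ_symm : ∀ x y : k, Φ x y = Φ y x := by
    intro x y; rw [hΦ_apply, hΦ_apply, LinearMap.trace_mul_comm]
  have hΦ_refl : Φ.IsRefl := fun x y h => by rw [hΦ_symm]; exact h
  have hΦ_inv : Φ.lieInvariant k := by
    intro x y z
    rw [hΦ_apply, hΦ_apply, LieSubalgebra.coe_bracket, LieSubalgebra.coe_bracket,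
      skewHermAux_trace_key]
    simp
  -- positive definiteness
  have hdef : ∀ x : k, Φ x x = 0 → x = 0 := by
    intro x hx
    set b := stdOrthonormalBasis ℂ V with hb
    have ht : LinearMap.trace ℂ V (x.val * x.val) =
        ∑ i, (inner ℂ (b i) (x.val (x.val (b i))) : ℂ) := skewHermAux_trace_eq_sum_inner _
    have hterm : ∀ i, (inner ℂ (b i) (x.val (x.val (b i))) : ℂ) = -(‖x.val (b i)‖ : ℂ) ^ 2 := by
      intro i
      have h := hskew x.val x.2 (b i) (x.val (b i))
      have : (inner ℂ (b i) (x.val (x.val (b i))) : ℂ) = -inner ℂ (x.val (b i)) (x.val (b i)) := by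
        rw [h]; ring
      rw [this, inner_self_eq_norm_sq_to_K]
      norm_cast
    have hsum : Φ x x = ∑ i, ‖x.val (b i)‖ ^ 2 := by
      rw [hΦ_apply, ht]
      simp only [hterm]
      simp [← Complex.ofReal_pow]
    rw [hsum] at hx
    have hzero : ∀ i, x.val (b i) = 0 := by
      intro i
      have h0 : ∀ i ∈ Finset.univ, (0:ℝ) ≤ ‖x.val (b i)‖ ^ 2 := fun i _ => sq_nonneg _
      have := (Finset.sum_eq_zero_iff_of_nonneg h0).mp hx i (Finset.mem_univ i)
      have := pow_eq_zero_iff (n := 2) (by norm_num) |>.mp this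
      simpa using this
    have hxv : x.val = 0 := by
      apply b.toBasis.ext
      intro i
      simpa using hzero i
    exact Subtype.ext hxv
  have hΦ_nondeg : Φ.Nondegenerate := ⟨fun x hx => hdef x (hx x), fun x hx => hdef x (hx x)⟩
  -- abbreviations
  set z := LieAlgebra.center ℝ k with hz
  set d := LieAlgebra.derivedSeries ℝ k 1 with hd
  have hd1 : d = ⁅(⊤ : LieIdeal ℝ k), (⊤ : LieIdeal ℝ k)⁆ := by
    rw [hd, LieAlgebra.derivedSeries_def, LieAlgebra.derivedSeriesOfIdeal_succ,
      LieAlgebra.derivedSeriesOfIdeal_zero]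
  -- the center is the orthogonal complement of the derived subalgebra
  have hdz : ∀ c, c ∈ z → ∀ x ∈ d, Φ x c = 0 := by
    intro c hc
    have hcc : ∀ a : k, ⁅a, c⁆ = 0 := (LieModule.mem_maxTrivSubmodule ℝ k k c).mp hc
    intro x hx
    have hle : LieSubmodule.toSubmodule d ≤ LinearMap.ker (Φ.flip c) := by
      rw [hd1, LieSubmodule.lieIdeal_oper_eq_linear_span]
      rw [Submodule.span_le]
      rintro _ ⟨a, n, rfl⟩
      have h : Φ ⁅(a : k), (n : k)⁆ c = 0 := by
        rw [hΦ_inv a.val n c, hcc a.val]; simp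
      simp only [SetLike.mem_coe, LinearMap.mem_ker]
      exact h
    have := hle hx
    simpa using this
  have hzd : ∀ c : k, (∀ x ∈ d, Φ x c = 0) → c ∈ z := by
    intro c hc
    rw [hz]
    apply (LieModule.mem_maxTrivSubmodule ℝ k k c).mpr
    intro a
    apply hdef
    have : ∀ w : k, Φ ⁅a, c⁆ w = 0 := by
      intro w
      rw [hΦ_inv a c w, hΦ_symm]
      have hw : ⁅a, w⁆ ∈ d := by
        rw [hd1]; exact LieSubmodule.lie_mem_lie (LieSubmodule.mem_top a) (LieSubmodule.mem_top w)
      rw [hc _ hw]; simp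
    exact this ⁅a, c⁆
  have hzeq : z = LieAlgebra.InvariantForm.orthogonal Φ hΦ_inv d := by
    ext c
    rw [LieAlgebra.InvariantForm.mem_orthogonal]
    exact ⟨fun hc => hdz c hc, fun hc => hzd c hc⟩
  -- restrictions of Φ are nondegenerate
  have hrestrict : ∀ W : Submodule ℝ k, (Φ.restrict W).Nondegenerate := by
    intro W
    refine ⟨fun x hx => ?_, fun x hx => ?_⟩
    all_goals
      have := hx x
      rw [LinearMap.BilinForm.restrict_apply] at this
      exact Subtype.ext (hdef x.val (by simpa using this))
  -- IsCompl
  have hcompl : IsCompl z d := by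
    rw [← LieSubmodule.isCompl_toSubmodule]
    have hcoe : LieSubmodule.toSubmodule z = Φ.orthogonal (LieSubmodule.toSubmodule d) := by
      rw [hzeq]
      exact LieAlgebra.InvariantForm.orthogonal_toSubmodule Φ hΦ_inv d
    rw [hcoe]
    exact ((LinearMap.BilinForm.restrict_nondegenerate_iff_isCompl_orthogonal hΦ_refl).mp
      (hrestrict _)).symm
  refine ⟨hcompl, ?_⟩
  -- Semisimplicity of the derived subalgebra
  haveI : Module.Finite ℝ d := by
    have : FiniteDimensional ℝ (LieSubmodule.toSubmodule d) := inferInstance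
    exact this
  let Φ' : LinearMap.BilinForm ℝ d := LinearMap.mk₂ ℝ
    (fun a b => Φ a.val b.val)
    (by intro a a' c; simp)
    (by intro r a c; simp)
    (by intro a c c'; simp)
    (by intro r a c; simp)
  have hΦ'_apply : ∀ a b : d, Φ' a b = Φ a.val b.val := fun _ _ => rfl
  have hbr : ∀ a b : d, (↑⁅a, b⁆ : k) = ⁅(a : k), (b : k)⁆ := fun _ _ => rfl
  have hΦ'_inv : Φ'.lieInvariant d := by
    intro a b c
    rw [hΦ'_apply, hΦ'_apply, hbr, hbr]
    exact hΦ_inv a.val b.val c.val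
  have hΦ'_refl : Φ'.IsRefl := by
    intro a b h
    rw [hΦ'_apply] at *
    rw [hΦ_symm]; exact h
  have hdef' : ∀ a : d, Φ' a a = 0 → a = 0 := by
    intro a ha
    exact Subtype.ext (hdef a.val ha)
  have hΦ'_nondeg : Φ'.Nondegenerate := ⟨fun a ha => hdef' a (ha a), fun a ha => hdef' a (ha a)⟩
  have hL : ∀ I : LieIdeal ℝ d, IsAtom I → ¬IsLieAbelian I := by
    intro I hI hab
    apply hI.1
    rw [LieSubmodule.eq_bot_iff]
    intro x hx
    -- brackets of two elements of I vanish
    have habel : ∀ a b : d, a ∈ I → b ∈ I → ⁅a, b⁆ = 0 := by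
      intro a b ha hb
      have h0 : (⁅(⟨a, ha⟩ : I), (⟨b, hb⟩ : I)⁆ : I) = 0 := trivial_lie_zero _ _ _ _
      have := congrArg (Subtype.val) h0
      exact this
    -- x commutes with everything in d
    have h1 : ∀ y : d, ⁅x, y⁆ = 0 := by
      intro y
      have hq : ⁅x, y⁆ ∈ I := by
        have hyx : ⁅y, x⁆ ∈ I := I.lie_mem hx
        rw [← lie_skew x y]
        exact I.neg_mem hyx
      apply hdef'
      have := hΦ'_inv x y ⁅x, y⁆
      rw [this, habel x ⁅x, y⁆ hx hq]
      simp
    -- hence x is central in k, but also lies in d, so x = 0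
    have h2 : ∀ a : k, ⁅(x : k), a⁆ = 0 := by
      intro a
      have hmem : a ∈ z ⊔ d := by
        rw [hcompl.codisjoint.eq_top]; trivial
      rw [← LieSubmodule.mem_toSubmodule, LieSubmodule.sup_toSubmodule] at hmem
      obtain ⟨b, hb, c, hc, rfl⟩ := Submodule.mem_sup.mp hmem
      have hzb : ⁅(x : k), b⁆ = 0 :=
        (LieModule.mem_maxTrivSubmodule ℝ k k b).mp hb (x : k)
      have hdc : ⁅(x : k), c⁆ = 0 := by
        have := h1 ⟨c, hc⟩
        have := congrArg (Subtype.val) this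
        exact this
      rw [lie_add, hzb, hdc, add_zero]
    have hxz : (x : k) ∈ z := by
      rw [hz]
      apply (LieModule.mem_maxTrivSubmodule ℝ k k _).mpr
      intro a
      rw [← lie_skew a (x : k), h2 a, neg_zero]
    have hxd : (x : k) ∈ d := x.2
    have : (x : k) ∈ z ⊓ d := ⟨hxz, hxd⟩
    rw [hcompl.disjoint.eq_bot] at this
    have : (x : k) = 0 := (LieSubmodule.mem_bot _).mp this
    exact Subtype.ext this
  exact LieAlgebra.InvariantForm.isSemisimple_of_nondegenerate Φ' hΦ'_nondeg hΦ'_inv hΦ'_refl hL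
end
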